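/- Let L', M', N', P', s, t be real numbers with L' ≥ M' > 0, N' > P' > 0, and sin(s − t) ≠ 0, and define γ₁(x) = (L' + M'·cos(s + x)) / (N' + P'·cos(t + x)) and C' = (L'·P')² + (M'·N')² − 2·L'·M'·N'·P'·cos(s − t). If the derivative of γ₁ at a real point x equals zero, then there exists a sign ε ∈ {−1, +1} such that γ₁(x) = L'/N' − (1/N')·C' / (P'·(L'·P' − M'·N'·cos(s − t)) + ε·N'·√(C' − (M'·P'·sin(s − t))²)). -/

import Mathlib

/-- Theorem 1 of the paper: for `L' ≥ M' > 0`, `N' > P' > 0`, `sin(s − t) ≠ 0`, and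
`γ₁(x) = (L' + M'·cos(s + x)) / (N' + P'·cos(t + x))`, with
`C' = (L'·P')² + (M'·N')² − 2·L'·M'·N'·P'·cos(s − t)`, at every stationary point `x`
of `γ₁` there is a sign `ε ∈ {−1, +1}` such that
`γ₁(x) = L'/N' − (1/N')·C' / (P'·(L'·P' − M'·N'·cos(s − t)) + ε·N'·√(C' − (M'·P'·sin(s − t))²))`. -/
theorem stmt_5 (L' M' N' P' s t : ℝ) (hLM : L' ≥ M') (hM : M' > 0)
    (hNP : N' > P') (hP : P' > 0) (hst : Real.sin (s - t) ≠ 0)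
    (γ₁ : ℝ → ℝ)
    (hγ : γ₁ = fun x => (L' + M' * Real.cos (s + x)) / (N' + P' * Real.cos (t + x)))
    (C' : ℝ)
    (hC : C' = (L' * P') ^ 2 + (M' * N') ^ 2 -
      2 * L' * M' * N' * P' * Real.cos (s - t))
    (x : ℝ) (hx : deriv γ₁ x = 0) :
    ∃ ε : ℝ, (ε = -1 ∨ ε = 1) ∧
      γ₁ x = L' / N' -
        (1 / N') * C' /
          (P' * (L' * P' - M' * N' * Real.cos (s - t)) +
            ε * N' * Real.sqrt (C' - (M' * P' * Real.sin (s - t)) ^ 2)) := by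
  set c := Real.cos (s - t) with hc
  set sn := Real.sin (s - t) with hsn
  set cu := Real.cos (s + x) with hcu
  set su := Real.sin (s + x) with hsu
  set cv := Real.cos (t + x) with hcv
  set sv := Real.sin (t + x) with hsv
  have hpy : sn ^ 2 + c ^ 2 = 1 := Real.sin_sq_add_cos_sq _
  have hpu : su ^ 2 + cu ^ 2 = 1 := Real.sin_sq_add_cos_sq _
  have hpv : sv ^ 2 + cv ^ 2 = 1 := Real.sin_sq_add_cos_sq _
  have hcsub : c = cu * cv + su * sv := by
    rw [hc, hcu, hcv, hsu, hsv, show s - t = (s + x) - (t + x) by ring, Real.cos_sub]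
  have hBx : N' + P' * cv > 0 := by
    nlinarith [Real.neg_one_le_cos (t + x), Real.cos_le_one (t + x)]
  have hA' : HasDerivAt (fun y => L' + M' * Real.cos (s + y)) (-(M' * Real.sin (s + x))) x := by
    have h1 : HasDerivAt (fun y : ℝ => s + y) 1 x := (hasDerivAt_id x).const_add s
    have h2 : HasDerivAt (fun y => Real.cos (s + y)) (-Real.sin (s + x) * 1) x :=
      (Real.hasDerivAt_cos (s + x)).comp x h1
    have := (h2.const_mul M').const_add L'
    exact this.congr_deriv (by ring)
  have hB' : HasDerivAt (fun y => N' + P' * Real.cos (t + y)) (-(P' * Real.sin (t + x))) x := by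
    have h1 : HasDerivAt (fun y : ℝ => t + y) 1 x := (hasDerivAt_id x).const_add t
    have h2 : HasDerivAt (fun y => Real.cos (t + y)) (-Real.sin (t + x) * 1) x :=
      (Real.hasDerivAt_cos (t + x)).comp x h1
    have := (h2.const_mul P').const_add N'
    exact this.congr_deriv (by ring)
  have hdiv : HasDerivAt γ₁
      ((-(M' * su) * (N' + P' * cv) - (L' + M' * cu) * (-(P' * sv))) / (N' + P' * cv) ^ 2) x := by
    rw [hγ]
    exact hA'.div hB' (ne_of_gt hBx)
  have hder0 : (-(M' * su) * (N' + P' * cv) - (L' + M' * cu) * (-(P' * sv))) / (N' + P' * cv) ^ 2 = 0 := by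
    rw [← hdiv.deriv]; exact hx
  have hstat : -(M' * su) * (N' + P' * cv) + (L' + M' * cu) * (P' * sv) = 0 := by
    have h2 : (N' + P' * cv) ^ 2 ≠ 0 := pow_ne_zero _ (ne_of_gt hBx)
    have h := (div_eq_zero_iff.mp hder0).resolve_right h2
    linear_combination h
  set γ : ℝ := γ₁ x with hγdef
  have hγB : γ * (N' + P' * cv) = L' + M' * cu := by
    rw [hγdef, hγ]
    field_simp
    exact mul_div_cancel_right₀ _ (ne_of_gt hBx)
  have hE2 : M' * su = γ * (P' * sv) := by
    have hBne : (N' + P' * cv) ≠ 0 := ne_of_gt hBx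
    have h : M' * su * (N' + P' * cv) = γ * (P' * sv) * (N' + P' * cv) := by
      calc M' * su * (N' + P' * cv) = (L' + M' * cu) * (P' * sv) := by linear_combination -hstat
        _ = γ * (N' + P' * cv) * (P' * sv) := by rw [hγB]
        _ = γ * (P' * sv) * (N' + P' * cv) := by ring
    exact mul_right_cancel₀ hBne h
  have hquad : (N' ^ 2 - P' ^ 2) * γ ^ 2 - 2 * (L' * N' - M' * P' * c) * γ + (L' ^ 2 - M' ^ 2) = 0 := by
    have h3 : (γ * N' - L') ^ 2 = (M' * cu - γ * (P' * cv)) ^ 2 := by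
      linear_combination (γ * N' - L' + M' * cu - γ * (P' * cv)) * hγB
    have h4 : (0:ℝ) = (M' * su - γ * (P' * sv)) ^ 2 := by
      linear_combination (-(M' * su) + γ * (P' * sv)) * hE2
    linear_combination h3 + h4 + M' ^ 2 * hpu + γ ^ 2 * P' ^ 2 * hpv + 2 * γ * M' * P' * hcsub
  set a := L' * P' - M' * N' * c with ha
  set q := L' * N' - M' * P' * c with hq
  set D := C' - (M' * P' * sn) ^ 2 with hD
  have hCa : C' = a ^ 2 + (M' * N' * sn) ^ 2 := by
    rw [hC, ha]
    linear_combination (-(M' * N') ^ 2) * hpy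
  have hsn2 : sn ^ 2 > 0 := by positivity
  have hDval : D = a ^ 2 + M' ^ 2 * sn ^ 2 * (N' ^ 2 - P' ^ 2) := by
    rw [hD, hCa]; ring
  have hNP2 : N' ^ 2 - P' ^ 2 > 0 := by
    have h := mul_pos (show (0:ℝ) < N' - P' by linarith) (show (0:ℝ) < N' + P' by linarith)
    calc (0:ℝ) < (N' - P') * (N' + P') := h
      _ = N' ^ 2 - P' ^ 2 := by ring
  have hDpos : D > 0 := by
    rw [hDval]
    exact add_pos_of_nonneg_of_pos (sq_nonneg a)
      (mul_pos (mul_pos (pow_pos hM 2) hsn2) hNP2)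
  have hCpos : C' > 0 := by
    have hN' : N' > 0 := lt_trans hP hNP
    have h2 : (M' * N' * sn) ^ 2 > 0 := by positivity
    rw [hCa]
    exact add_pos_of_nonneg_of_pos (sq_nonneg a) h2
  set W := Real.sqrt D with hW
  have hW2 : W ^ 2 = D := Real.sq_sqrt hDpos.le
  have hWpos : W > 0 := Real.sqrt_pos.mpr hDpos
  have he2 : ((N' ^ 2 - P' ^ 2) * γ - q) ^ 2 = W ^ 2 := by
    rw [hW2, hD, hC, hq]
    linear_combination (N' ^ 2 - P' ^ 2) * hquad + (M' * P') ^ 2 * hpy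
  have hN : N' ≠ 0 := ne_of_gt (lt_trans hP hNP)
  have hprod : (P' * a - N' * W) * (P' * a + N' * W) = -(N' ^ 2 - P' ^ 2) * C' := by
    linear_combination (-N' ^ 2) * hW2 + (-N' ^ 2) * hDval + (N' ^ 2 - P' ^ 2) * hCa
  have hprodne : (P' * a - N' * W) * (P' * a + N' * W) ≠ 0 := by
    rw [hprod]
    exact ne_of_lt (by linarith [mul_pos hNP2 hCpos])
  have hd1 : P' * a - N' * W ≠ 0 := fun h => hprodne (by rw [h, zero_mul])
  have hd2 : P' * a + N' * W ≠ 0 := fun h => hprodne (by rw [h, mul_zero])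
  have hcases : (N' ^ 2 - P' ^ 2) * γ - q = W ∨ (N' ^ 2 - P' ^ 2) * γ - q = -W := by
    have h0 : ((N' ^ 2 - P' ^ 2) * γ - q - W) * ((N' ^ 2 - P' ^ 2) * γ - q + W) = 0 := by
      linear_combination he2
    rcases mul_eq_zero.mp h0 with h | h
    · left; linarith
    · right; linarith
  rcases hcases with h1 | h1
  · refine ⟨-1, Or.inl rfl, ?_⟩
    have key : (L' - N' * γ) * (P' * a - N' * W) = C' := by
      have hk : (N' ^ 2 - P' ^ 2) * ((L' - N' * γ) * (P' * a - N' * W)) = (N' ^ 2 - P' ^ 2) * C' := by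
        have hLg : (N' ^ 2 - P' ^ 2) * (L' - N' * γ) = -(P' * a + N' * W) := by
          linear_combination (-N') * h1 + P' * ha - N' * hq
        calc (N' ^ 2 - P' ^ 2) * ((L' - N' * γ) * (P' * a - N' * W))
            = ((N' ^ 2 - P' ^ 2) * (L' - N' * γ)) * (P' * a - N' * W) := by ring
          _ = -(P' * a + N' * W) * (P' * a - N' * W) := by rw [hLg]
          _ = (N' ^ 2 - P' ^ 2) * C' := by linear_combination -hprod
      exact mul_left_cancel₀ (ne_of_gt hNP2) hk
    have hden : P' * a + (-1 : ℝ) * N' * W ≠ 0 := by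
      intro h; exact hd1 (by linarith)
    have h5 : C' / (P' * a + (-1 : ℝ) * N' * W) = L' - N' * γ := by
      rw [div_eq_iff hden]
      linear_combination -key
    have h6 : γ = L' / N' - 1 / N' * (L' - N' * γ) := by
      field_simp
      ring
    calc γ = L' / N' - 1 / N' * (L' - N' * γ) := h6
      _ = L' / N' - 1 / N' * C' / (P' * a + (-1 : ℝ) * N' * W) := by rw [← h5]; ring
  · refine ⟨1, Or.inr rfl, ?_⟩
    have key : (L' - N' * γ) * (P' * a + N' * W) = C' := by
      have hk : (N' ^ 2 - P' ^ 2) * ((L' - N' * γ) * (P' * a + N' * W)) = (N' ^ 2 - P' ^ 2) * C' := by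
        have hLg : (N' ^ 2 - P' ^ 2) * (L' - N' * γ) = -(P' * a - N' * W) := by
          linear_combination (-N') * h1 + P' * ha - N' * hq
        calc (N' ^ 2 - P' ^ 2) * ((L' - N' * γ) * (P' * a + N' * W))
            = ((N' ^ 2 - P' ^ 2) * (L' - N' * γ)) * (P' * a + N' * W) := by ring
          _ = -(P' * a - N' * W) * (P' * a + N' * W) := by rw [hLg]
          _ = (N' ^ 2 - P' ^ 2) * C' := by linear_combination -hprod
      exact mul_left_cancel₀ (ne_of_gt hNP2) hk
    have hden : P' * a + (1 : ℝ) * N' * W ≠ 0 := by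
      intro h; exact hd2 (by linarith)
    have h5 : C' / (P' * a + (1 : ℝ) * N' * W) = L' - N' * γ := by
      rw [div_eq_iff hden]
      linear_combination -key
    have h6 : γ = L' / N' - 1 / N' * (L' - N' * γ) := by
      field_simp
      ring
    calc γ = L' / N' - 1 / N' * (L' - N' * γ) := h6
      _ = L' / N' - 1 / N' * C' / (P' * a + (1 : ℝ) * N' * W) := by rw [← h5]; ring
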